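/- Every natural number n > 10^d, where d is coprime to 10, has a decimal subword (a number formed by consecutive decimal digits of n) divisible by d. In particular, every integer n > 10^10000000007 contains a decimal subword divisible by 10000000007. -/
import Mathlib

/-- The base-`B` subword of `n` from digit position `i` to `j`. -/
def subword (B n i j : ℕ) : ℕ :=
  ∑ k ∈ Finset.Icc i j, (Nat.digits B n).getD k 0 * B ^ (k - i)

lemma ofDigits_take_eq_sum (L : List ℕ) (m : ℕ) :
    Nat.ofDigits 10 (L.take m) = ∑ k ∈ Finset.range m, L.getD k 0 * 10 ^ k := by
  induction L generalizing m with
  | nil => simp [Nat.ofDigits]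
  | cons a L ih =>
    cases m with
    | zero => simp
    | succ m =>
      rw [Finset.sum_range_succ']
      simp only [List.take_succ_cons, Nat.ofDigits_cons, List.getD_cons_succ,
        List.getD_cons_zero, pow_zero, mul_one, ih, Finset.mul_sum]
      rw [add_comm]
      congr 1
      exact Finset.sum_congr rfl fun k _ => by ring

lemma mod_pow_eq_sum (n m : ℕ) (hm : m ≤ (Nat.digits 10 n).length) :
    n % 10 ^ m = ∑ k ∈ Finset.range m, (Nat.digits 10 n).getD k 0 * 10 ^ k := by
  set L := Nat.digits 10 n with hL
  have h1 : n = Nat.ofDigits 10 (L.take m) + 10 ^ m * Nat.ofDigits 10 (L.drop m) := by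
    conv_lhs => rw [← Nat.ofDigits_digits 10 n, ← hL, ← List.take_append_drop m L]
    rw [Nat.ofDigits_append, List.length_take, min_eq_left hm]
  have h2 : Nat.ofDigits 10 (L.take m) < 10 ^ m := by
    have := Nat.ofDigits_lt_base_pow_length (b := 10) (l := L.take m) (by norm_num)
      (fun x hx => Nat.digits_lt_base (by norm_num) (List.mem_of_mem_take hx))
    rwa [List.length_take, min_eq_left hm] at this
  rw [h1, Nat.add_mul_mod_self_left, Nat.mod_eq_of_lt h2, ofDigits_take_eq_sum]

theorem decimal_subword_divisible :
    (∀ d n : ℕ, 0 < d → Nat.Coprime d 10 → 10 ^ d < n →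
      ∃ i j : ℕ, i ≤ j ∧ j < (Nat.digits 10 n).length ∧ d ∣ subword 10 n i j) ∧
    (∀ n : ℕ, 10 ^ 10000000007 < n →
      ∃ i j : ℕ, i ≤ j ∧ j < (Nat.digits 10 n).length ∧
        10000000007 ∣ subword 10 n i j) := by
  have main : ∀ d n : ℕ, 0 < d → Nat.Coprime d 10 → 10 ^ d < n →
      ∃ i j : ℕ, i ≤ j ∧ j < (Nat.digits 10 n).length ∧ d ∣ subword 10 n i j := by
    intro d n hd hcop hn
    have hlen : d < (Nat.digits 10 n).length := by
      have h1 : n < 10 ^ (Nat.digits 10 n).length :=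
        Nat.lt_base_pow_length_digits (by norm_num)
      have := lt_trans hn h1
      exact (Nat.pow_lt_pow_iff_right (by norm_num)).mp this
    -- pigeonhole on residues of n % 10^(j+1) mod d for j ∈ range (d+1)
    obtain ⟨a, ha, b, hb, hab, heq⟩ :=
      Finset.exists_ne_map_eq_of_card_lt_of_maps_to (s := Finset.range (d + 1))
        (t := Finset.range d) (by simp) (f := fun j => n % 10 ^ (j + 1) % d)
        (fun j _ => Finset.mem_range.mpr (Nat.mod_lt _ hd))
    wlog hlt : a < b generalizing a b
    · exact this b hb a ha (Ne.symm hab) heq.symm (by omega)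
    simp only [Finset.mem_range] at ha hb
    refine ⟨a + 1, b, hlt, by omega, ?_⟩
    have hmeq : n % 10 ^ (a + 1) ≡ n % 10 ^ (b + 1) [MOD d] := heq
    have hdvd : (d : ℤ) ∣ (n % 10 ^ (b + 1) : ℕ) - (n % 10 ^ (a + 1) : ℕ) := hmeq.dvd
    have hkey : (n % 10 ^ (b + 1) : ℕ) - ((n % 10 ^ (a + 1) : ℕ) : ℤ) =
        (10 : ℤ) ^ (a + 1) * (subword 10 n (a + 1) b : ℤ) := by
      rw [mod_pow_eq_sum n (a + 1) (by omega), mod_pow_eq_sum n (b + 1) (by omega)]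
      have hsub : Finset.range (a + 1) ⊆ Finset.range (b + 1) :=
        Finset.range_subset_range.mpr (by omega)
      push_cast
      rw [← Finset.sum_sdiff hsub, add_sub_cancel_right]
      have : Finset.range (b + 1) \ Finset.range (a + 1) = Finset.Icc (a + 1) b := by
        ext k; simp [Finset.mem_Icc, Nat.lt_succ_iff]; omega
      rw [this, subword]
      push_cast
      rw [Finset.mul_sum]
      apply Finset.sum_congr rfl
      intro k hk
      simp only [Finset.mem_Icc] at hk
      rw [show (10:ℤ) ^ (a + 1) * (((Nat.digits 10 n).getD k 0 : ℤ) * 10 ^ (k - (a + 1)))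
        = ((Nat.digits 10 n).getD k 0 : ℤ) * (10 ^ (a + 1) * 10 ^ (k - (a + 1))) by ring,
        ← pow_add]
      congr 2
      omega
    rw [hkey] at hdvd
    have hcop' : IsCoprime (d : ℤ) ((10 : ℤ) ^ (a + 1)) := by
      apply IsCoprime.pow_right
      exact_mod_cast Nat.isCoprime_iff_coprime.mpr hcop
    have := hcop'.dvd_of_dvd_mul_left hdvd
    exact_mod_cast this
  refine ⟨main, fun n hn => main 10000000007 n (by norm_num) (by decide) hn⟩
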